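/- Let V be a finite-dimensional real normed vector space, F ⊆ V a finite nonempty set, and S ⊆ V a finite set such that cone(S) is a proper cone. Then for every v ∈ F there exists a neighborhood U of v in V such that (conv(F) + cone(S)) ∩ U = ( v + cone({w − v : w ∈ F} ∪ S) ) ∩ U; i.e., the local cone of conv(F) + cone(S) at v is the cone generated by {w − v : w ∈ F} ∪ S. -/

import Mathlib

open Pointwise

/-- The cone generated by a set `S`: all finite nonnegative linear combinations of
elements of `S`. -/
def coneGen {V : Type*} [AddCommGroup V] [Module ℝ V] (S : Set V) : Set V :=
  { v | ∃ (n : ℕ) (c : Fin n → ℝ) (s : Fin n → V),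
      (∀ i, 0 ≤ c i) ∧ (∀ i, s i ∈ S) ∧ v = ∑ i, c i • s i }

section Aux
variable {V : Type*} [AddCommGroup V] [Module ℝ V]

lemma coneGen_zero_mem (S : Set V) : (0 : V) ∈ coneGen S :=
  ⟨0, ![], ![], by simp, by simp, by simp⟩

lemma coneGen_add_mem {S : Set V} {x y : V} (hx : x ∈ coneGen S) (hy : y ∈ coneGen S) :
    x + y ∈ coneGen S := by
  obtain ⟨n, c, s, hc, hs, rfl⟩ := hx
  obtain ⟨m, d, t, hd, ht, rfl⟩ := hy
  refine ⟨n + m, Fin.append c d, Fin.append s t, ?_, ?_, ?_⟩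
  · intro i
    refine Fin.addCases (fun j => ?_) (fun j => ?_) i <;>
      simp [Fin.append_left, Fin.append_right, hc, hd]
  · intro i
    refine Fin.addCases (fun j => ?_) (fun j => ?_) i <;>
      simp [Fin.append_left, Fin.append_right, hs, ht]
  · rw [Fin.sum_univ_add]
    simp

lemma coneGen_smul_single_mem {S : Set V} {c : ℝ} {s : V} (hc : 0 ≤ c) (hs : s ∈ S) :
    c • s ∈ coneGen S :=
  ⟨1, ![c], ![s], by simpa, by simpa, by simp⟩

lemma coneGen_mono {S T : Set V} (h : S ⊆ T) : coneGen S ⊆ coneGen T := by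
  rintro x ⟨n, c, s, hc, hs, rfl⟩
  exact ⟨n, c, s, hc, fun i => h (hs i), rfl⟩

lemma coneGen_sum_mem {S : Set V} {ι : Type*} (Q : Finset ι) (f : ι → V)
    (hf : ∀ i ∈ Q, f i ∈ coneGen S) : ∑ i ∈ Q, f i ∈ coneGen S := by
  classical
  induction Q using Finset.induction_on with
  | empty => simpa using coneGen_zero_mem S
  | insert _ _ hnot ih =>
    rw [Finset.sum_insert hnot]
    exact coneGen_add_mem (hf _ (Finset.mem_insert_self _ _))
      (ih fun i hi => hf i (Finset.mem_insert_of_mem hi))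

lemma caratheodory_cone : ∀ (n : ℕ) (t : Fin n → V) (c : Fin n → ℝ), (∀ i, 0 ≤ c i) →
    ∃ (m : ℕ) (d : Fin m → ℝ) (s : Fin m → V), LinearIndependent ℝ s ∧
      (∀ i, 0 ≤ d i) ∧ (∀ i, ∃ j, s i = t j) ∧ ∑ i, d i • s i = ∑ i, c i • t i := by
  intro n
  induction n with
  | zero =>
    intro t c _
    exact ⟨0, ![], ![], linearIndependent_empty_type, by simp, by simp, by simp⟩
  | succ n ih =>
    intro t c hc
    by_cases hli : LinearIndependent ℝ t
    · exact ⟨n + 1, c, t, hli, hc, fun i => ⟨i, rfl⟩, rfl⟩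
    · rw [Fintype.linearIndependent_iff] at hli
      push_neg at hli
      obtain ⟨g, hg0, i₁, hgi₁⟩ := hli
      -- get g' with sum zero and some positive entry
      obtain ⟨g', hg'0, i₂, hgi₂⟩ :
          ∃ g' : Fin (n+1) → ℝ, ∑ i, g' i • t i = 0 ∧ ∃ i, 0 < g' i := by
        rcases lt_or_gt_of_ne hgi₁ with h | h
        · exact ⟨-g, by simp [hg0, Finset.sum_neg_distrib], i₁, by simpa using h⟩
        · exact ⟨g, hg0, i₁, h⟩
      classical
      obtain ⟨i₀, hi₀mem, hi₀min⟩ :=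
        (Finset.univ.filter (fun i => 0 < g' i)).exists_min_image
          (fun i => c i / g' i) ⟨i₂, by simpa using hgi₂⟩
      have hgi₀ : 0 < g' i₀ := by simpa using hi₀mem
      set α := c i₀ / g' i₀ with hα
      have hα0 : 0 ≤ α := div_nonneg (hc i₀) hgi₀.le
      set c' : Fin (n+1) → ℝ := fun i => c i - α * g' i with hc'
      have hc'0 : ∀ i, 0 ≤ c' i := by
        intro i
        by_cases h : 0 < g' i
        · have hle : α ≤ c i / g' i := hi₀min i (by simpa using h)
          have := (le_div_iff₀ h).mp hle
          simp only [hc']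
          linarith
        · push_neg at h
          have : α * g' i ≤ 0 := mul_nonpos_of_nonneg_of_nonpos hα0 h
          simp only [hc']
          linarith [hc i]
      have hc'i₀ : c' i₀ = 0 := by
        simp only [hc', hα]
        field_simp
        ring
      have hsum : ∑ i, c' i • t i = ∑ i, c i • t i := by
        simp only [hc', sub_smul, Finset.sum_sub_distrib, mul_smul, ← Finset.smul_sum,
          hg'0, smul_zero, sub_zero]
      obtain ⟨m, d, s, hsli, hd0, hmem, hseq⟩ :=
        ih (t ∘ i₀.succAbove) (c' ∘ i₀.succAbove) (fun i => hc'0 _)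
      refine ⟨m, d, s, hsli, hd0, fun i => ?_, ?_⟩
      · obtain ⟨j, hj⟩ := hmem i
        exact ⟨i₀.succAbove j, hj⟩
      · rw [hseq, ← hsum, Fin.sum_univ_succAbove (fun i => c' i • t i) i₀, hc'i₀]
        simp

end Aux

section Normed
variable {V : Type*} [NormedAddCommGroup V] [NormedSpace ℝ V] [FiniteDimensional ℝ V]

lemma coeff_bound {m : ℕ} (s : Fin m → V) (hs : LinearIndependent ℝ s) :
    ∃ K : ℝ, 0 ≤ K ∧ ∀ c : Fin m → ℝ, ∑ i, |c i| ≤ K * ‖∑ i, c i • s i‖ := by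
  set f : (Fin m → ℝ) →ₗ[ℝ] V :=
    { toFun := fun c => ∑ i, c i • s i
      map_add' := by intro a b; simp [add_smul, Finset.sum_add_distrib]
      map_smul' := by intro r a; simp [mul_smul, Finset.smul_sum] }
  have hinj : Function.Injective f := by
    rw [injective_iff_map_eq_zero]
    intro c hc
    funext i
    exact Fintype.linearIndependent_iff.mp hs c hc i
  set e : (Fin m → ℝ) ≃ₗ[ℝ] LinearMap.range f := LinearEquiv.ofInjective f hinj
  have hcont : Continuous e.symm := LinearMap.continuous_of_finiteDimensional e.symm.toLinearMap
  set g : (LinearMap.range f) →L[ℝ] (Fin m → ℝ) := ⟨e.symm.toLinearMap, hcont⟩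
  refine ⟨m * ‖g‖, by positivity, fun c => ?_⟩
  have h1 : ∀ i, |c i| ≤ ‖c‖ := fun i => norm_le_pi_norm c i
  have h2 : ∑ i, |c i| ≤ m * ‖c‖ := by
    calc ∑ i, |c i| ≤ ∑ _i : Fin m, ‖c‖ := Finset.sum_le_sum fun i _ => h1 i
    _ = m * ‖c‖ := by simp [mul_comm]
  have h3 : c = g ⟨f c, LinearMap.mem_range_self f c⟩ := by
    have : (⟨f c, LinearMap.mem_range_self f c⟩ : LinearMap.range f) = e c := rfl
    simp only [g, this]
    exact (e.symm_apply_apply c).symm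
  have h4 : ‖c‖ ≤ ‖g‖ * ‖f c‖ := by
    calc ‖c‖ = ‖g ⟨f c, LinearMap.mem_range_self f c⟩‖ := by rw [← h3]
    _ ≤ ‖g‖ * ‖(⟨f c, LinearMap.mem_range_self f c⟩ : LinearMap.range f)‖ := g.le_opNorm _
    _ = ‖g‖ * ‖f c‖ := rfl
  have : (m : ℝ) * ‖c‖ ≤ m * (‖g‖ * ‖f c‖) :=
    mul_le_mul_of_nonneg_left h4 (Nat.cast_nonneg m)
  have hfc : f c = ∑ i, c i • s i := rfl
  rw [← hfc]
  linarith

lemma exists_uniform_bound(T : Set V) (hT : T.Finite) :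
    ∃ C : ℝ, 0 ≤ C ∧ ∀ (m : ℕ) (s : Fin m → V), LinearIndependent ℝ s → (∀ i, s i ∈ T) →
      ∀ c : Fin m → ℝ, ∑ i, |c i| ≤ C * ‖∑ i, c i • s i‖ := by
  classical
  haveI : Fintype T := hT.fintype
  set N := Module.finrank ℝ V with hN
  set K : ∀ m : ℕ, (Fin m → T) → ℝ := fun m f =>
    if h : LinearIndependent ℝ (fun i => (f i : V)) then (coeff_bound _ h).choose else 0
    with hK
  have hK0 : ∀ m f, 0 ≤ K m f := by
    intro m f
    simp only [hK]
    split
    · exact (coeff_bound _ ‹_›).choose_spec.1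
    · exact le_refl 0
  set C : ℝ := ∑ m ∈ Finset.range (N + 1), ∑ f : Fin m → T, K m f with hC
  have hC0 : 0 ≤ C :=
    Finset.sum_nonneg fun m _ => Finset.sum_nonneg fun f _ => hK0 m f
  refine ⟨C, hC0, fun m s hs hmem c => ?_⟩
  set f : Fin m → T := fun i => ⟨s i, hmem i⟩ with hf
  have hfs : (fun i => (f i : V)) = s := rfl
  have hm : m ≤ N := by
    have := hs.fintype_card_le_finrank
    simpa using this
  have hKle : K m f ≤ C := by
    have h1 : K m f ≤ ∑ f : Fin m → T, K m f :=
      Finset.single_le_sum (fun g _ => hK0 m g) (Finset.mem_univ f)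
    have h2 : ∑ f : Fin m → T, K m f ≤ C :=
      Finset.single_le_sum (f := fun m => ∑ f : Fin m → T, K m f)
        (fun k _ => Finset.sum_nonneg fun g _ => hK0 k g)
        (Finset.mem_range.mpr (Nat.lt_succ_of_le hm))
    linarith
  have hKspec : ∀ c : Fin m → ℝ, ∑ i, |c i| ≤ K m f * ‖∑ i, c i • s i‖ := by
    have hli : LinearIndependent ℝ (fun i => (f i : V)) := by rw [hfs]; exact hs
    have : K m f = (coeff_bound _ hli).choose := by simp only [hK, dif_pos hli]
    rw [this]
    have := (coeff_bound _ hli).choose_spec.2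
    simpa [hfs] using this
  calc ∑ i, |c i| ≤ K m f * ‖∑ i, c i • s i‖ := hKspec c
  _ ≤ C * ‖∑ i, c i • s i‖ := mul_le_mul_of_nonneg_right hKle (norm_nonneg _)

end Normed

/-- The local cone of `conv F + cone S` at a point `v ∈ F` is the cone generated by
`{w - v : w ∈ F} ∪ S`. -/
theorem local_cone_of_polytope_add_proper_cone
    {V : Type*} [NormedAddCommGroup V] [NormedSpace ℝ V] [FiniteDimensional ℝ V]
    (F : Set V) (hFfin : F.Finite) (hFne : F.Nonempty)
    (S : Set V) (hSfin : S.Finite)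
    (hproper : ∀ u ∈ coneGen S, -u ∈ coneGen S → u = 0) :
    ∀ v ∈ F, ∃ U ∈ nhds v,
      (convexHull ℝ F + coneGen S) ∩ U =
        (v +ᵥ coneGen ((fun w => w - v) '' F ∪ S)) ∩ U := by
  classical
  intro v hv
  set T : Set V := (fun w => w - v) '' F ∪ S with hT
  have hTfin : T.Finite := (hFfin.image _).union hSfin
  obtain ⟨C, hC0, hC⟩ := exists_uniform_bound T hTfin
  refine ⟨Metric.ball v (1 / (C + 1)), Metric.ball_mem_nhds v (by positivity), ?_⟩
  ext x
  simp only [Set.mem_inter_iff, and_congr_left_iff]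
  intro hxU
  rw [Set.mem_vadd_set_iff_neg_vadd_mem]
  have hneg : -v +ᵥ x = x - v := by
    simp [vadd_eq_add, sub_eq_neg_add]
  rw [hneg]
  constructor
  · -- easy, global direction
    rintro ⟨p, hp, c, hc, rfl⟩
    obtain ⟨ι, _, w, z, hw0, hw1, hz, hsum⟩ :=
      (mem_convexHull_iff_exists_fintype (R := ℝ)).mp hp
    show p + c - v ∈ coneGen T
    have hpv : p + c - v = (∑ i, w i • (z i - v)) + c := by
      have h5 : ∑ i, w i • (z i - v) = (∑ i, w i • z i) - (∑ i, w i) • v := by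
        rw [Finset.sum_smul, ← Finset.sum_sub_distrib]
        exact Finset.sum_congr rfl fun i _ => smul_sub _ _ _
      rw [h5, hsum, hw1, one_smul]
      abel
    rw [hpv]
    refine coneGen_add_mem ?_ (coneGen_mono Set.subset_union_right hc)
    exact coneGen_sum_mem Finset.univ _ fun i _ =>
      coneGen_smul_single_mem (hw0 i) (Or.inl ⟨z i, hz i, rfl⟩)
  · -- hard, local direction
    rintro ⟨n, c, t, hc0, ht, hxv⟩
    obtain ⟨m, d, s, hsli, hd0, hsmem, hseq⟩ := caratheodory_cone n t c hc0
    have hsT : ∀ i, s i ∈ T := fun i => by obtain ⟨j, hj⟩ := hsmem i; rw [hj]; exact ht j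
    have hu : x - v = ∑ i, d i • s i := by rw [hseq, ← hxv]
    have hnorm : ‖x - v‖ < 1 / (C + 1) := by
      rw [← dist_eq_norm]
      exact Metric.mem_ball.mp hxU
    have hsum_lt : ∑ i, d i < 1 := by
      have h1 : ∑ i, |d i| ≤ C * ‖∑ i, d i • s i‖ := hC m s hsli hsT d
      rw [← hu] at h1
      have h2 : ∑ i, d i ≤ ∑ i, |d i| :=
        Finset.sum_le_sum fun i _ => le_abs_self _
      have h3 : C * ‖x - v‖ ≤ C * (1 / (C + 1)) :=
        mul_le_mul_of_nonneg_left hnorm.le hC0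
      have h4 : C * (1 / (C + 1)) < 1 := by
        rw [mul_one_div]
        rw [div_lt_one (by positivity)]
        linarith
      linarith
    set P : Finset (Fin m) := Finset.univ.filter (fun i => s i ∈ (fun w => w - v) '' F)
      with hP
    set w : Fin m → V := fun i =>
      if h : s i ∈ (fun w => w - v) '' F then h.choose else v with hw
    have hwF : ∀ i, w i ∈ F := by
      intro i
      simp only [hw]
      split
      · next h => exact h.choose_spec.1
      · exact hv
    have hwsub : ∀ i ∈ P, w i - v = s i := by
      intro i hi
      have h : s i ∈ (fun w => w - v) '' F := by simpa [hP] using hi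
      simp only [hw, dif_pos h]
      exact h.choose_spec.2
    set σ : ℝ := ∑ i ∈ P, d i with hσ
    have hσ0 : 0 ≤ σ := Finset.sum_nonneg fun i _ => hd0 i
    have hσlt : σ < 1 := by
      have : σ ≤ ∑ i, d i :=
        Finset.sum_le_sum_of_subset_of_nonneg (Finset.filter_subset _ _)
          (fun i _ _ => hd0 i)
      linarith
    set p : V := (1 - σ) • v + ∑ i ∈ P, d i • w i with hp
    have hpF : p ∈ convexHull ℝ F := by
      set d' : Fin m → ℝ := fun i => if i ∈ P then d i else 0 with hd'
      refine mem_convexHull_of_exists_fintype (ι := Fin (m + 1))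
        (Fin.cons (1 - σ) d') (Fin.cons v w) ?_ ?_ ?_ ?_
      · intro i
        refine Fin.cases ?_ ?_ i
        · simp; linarith
        · intro j
          simp only [Fin.cons_succ, hd']
          split
          · exact hd0 j
          · exact le_refl 0
      · rw [Fin.sum_univ_succ]
        simp only [Fin.cons_zero, Fin.cons_succ]
        have : ∑ i, d' i = σ := by
          rw [hσ, Finset.sum_filter]
          exact Finset.sum_congr rfl fun i _ => by simp [hd', hP]
        rw [this]; ring
      · intro i
        refine Fin.cases ?_ ?_ i
        · simpa using hv
        · intro j; simpa using hwF j
      · rw [Fin.sum_univ_succ]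
        simp only [Fin.cons_zero, Fin.cons_succ]
        have : ∑ i, d' i • w i = ∑ i ∈ P, d i • w i := by
          rw [Finset.sum_filter]
          refine Finset.sum_congr rfl fun i _ => ?_
          simp only [hd']
          by_cases h : s i ∈ (fun w => w - v) '' F
          · have hiP : i ∈ P := by simp only [hP, Finset.mem_filter, Finset.mem_univ, true_and]; exact h
            rw [if_pos hiP, if_pos h]
          · have hiP : i ∉ P := by simp only [hP, Finset.mem_filter, Finset.mem_univ, true_and]; exact h
            rw [if_neg hiP, if_neg h, zero_smul]
        rw [this, hp]
    set c' : V := ∑ i ∈ Pᶜ, d i • s i with hc'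
    have hc'S : c' ∈ coneGen S := by
      refine coneGen_sum_mem _ _ fun i hi => ?_
      have hiS : s i ∈ S := by
        have := hsT i
        rcases this with h | h
        · exfalso
          have : i ∈ P := by simpa [hP] using h
          simp [Finset.mem_compl] at hi
          exact hi this
        · exact h
      exact coneGen_smul_single_mem (hd0 i) hiS
    refine ⟨p, hpF, c', hc'S, ?_⟩
    show p + c' = x
    have hx : x = v + (x - v) := by abel
    rw [hu] at hx
    have hsplit : ∑ i, d i • s i = ∑ i ∈ P, d i • s i + ∑ i ∈ Pᶜ, d i • s i := by
      rw [← Finset.sum_filter_add_sum_filter_not Finset.univ (fun i => i ∈ P)]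
      congr 1
      · apply Finset.sum_congr _ fun _ _ => rfl
        ext i; simp [hP]
      · apply Finset.sum_congr _ fun _ _ => rfl
        ext i; simp [hP, Finset.mem_compl]
    have hPsum : ∑ i ∈ P, d i • s i = ∑ i ∈ P, d i • w i - σ • v := by
      rw [hσ, Finset.sum_smul]
      rw [← Finset.sum_sub_distrib]
      refine Finset.sum_congr rfl fun i hi => ?_
      rw [← hwsub i hi, smul_sub]
    rw [hx, hsplit, hPsum, hp, hc']
    module
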